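/- Suppose the synchronization set S is A-invariant, i.e., A · (1_n ⊗ I_m) = 1_n ⊗ A_1 (equivalently A_1 = A_2 = ⋯ = A_n). Then the linear network x(t+1) = A x(t) over F_p achieves synchronization if and only if the characteristic polynomial of A equals λ^{nm−m} · P_{A_1}(λ), where P_{A_1} is the characteristic polynomial of A_1. -/

import Mathlib

open Matrix Polynomial

lemma charpoly_conj_aux {R ι : Type*} [CommRing R] [Fintype ι] [DecidableEq ι]
    (P B Q : Matrix ι ι R) (hPQ : P * Q = 1) :
    (P * B * Q).charpoly = B.charpoly := by
  have hC : (P.map C) * (Q.map C) = 1 := by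
    rw [← Matrix.map_mul, hPQ]
    exact Matrix.map_one _ (map_zero C) (map_one C)
  have key : charmatrix (P * B * Q) = P.map C * charmatrix B * Q.map C := by
    rw [charmatrix, charmatrix, Matrix.mul_sub, Matrix.sub_mul]
    congr 1
    · rw [Matrix.mul_assoc, (Matrix.scalar_commute (X : R[X]) (fun r' => mul_comm _ _) (Q.map C)).eq,
        ← Matrix.mul_assoc, hC, Matrix.one_mul]
    · simp only [RingHom.mapMatrix_apply, Matrix.map_mul, Matrix.mul_assoc]
  rw [Matrix.charpoly, Matrix.charpoly, key, det_mul, det_mul]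
  have : (P.map C).det * (Q.map C).det = 1 := by rw [← det_mul, hC, det_one]
  calc (P.map C).det * (charmatrix B).det * (Q.map C).det
      = (P.map C).det * (Q.map C).det * (charmatrix B).det := by ring
    _ = (charmatrix B).det := by rw [this, one_mul]

lemma nilpotent_iff_charpoly_aux {K ι : Type*} [Field K] [Fintype ι] [DecidableEq ι]
    (N : Matrix ι ι K) : IsNilpotent N ↔ N.charpoly = X ^ Fintype.card ι := by
  constructor
  · intro h
    have h2 := Matrix.isNilpotent_charpoly_sub_pow_of_isNilpotent h
    exact sub_eq_zero.mp (IsNilpotent.eq_zero h2)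
  · intro h
    refine ⟨Fintype.card ι, ?_⟩
    have := N.aeval_self_charpoly
    rw [h] at this
    simpa using this

/-- The i-th block row sum `A_i = ∑_{j=1}^n A_{ij}` of an n×n block matrix with m×m blocks. -/
def blockRowSum {p n m : ℕ} (A : Matrix (Fin n × Fin m) (Fin n × Fin m) (ZMod p))
    (i : Fin n) : Matrix (Fin m) (Fin m) (ZMod p) :=
  Matrix.of fun a b => ∑ j : Fin n, A (i, a) (j, b)

/-- Theorem 1: Suppose the synchronization set `S` is `A`-invariant, i.e.
`A_1 = A_2 = ⋯ = A_n`. Then the network `x(t+1) = A x(t)` over `F_p` achieves synchronization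
if and only if `P_A(λ) = λ^{nm - m} · P_{A_1}(λ)`. -/
theorem synchronization_iff_charpoly (p n m : ℕ) [Fact p.Prime] [NeZero n] [NeZero m]
    (A : Matrix (Fin n × Fin m) (Fin n × Fin m) (ZMod p))
    (hS : ∀ i : Fin n, blockRowSum A i = blockRowSum A 0) :
    (∀ x0 : Fin n × Fin m → ZMod p, ∃ T : ℕ, ∀ t ≥ T,
        ∀ i j : Fin n, ∀ a : Fin m, ((A ^ t) *ᵥ x0) (i, a) = ((A ^ t) *ᵥ x0) (j, a)) ↔
      A.charpoly = X ^ (n * m - m) * (blockRowSum A 0).charpoly := by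
  classical
  -- the change-of-basis "difference" matrix
  set E : Matrix (Fin n × Fin m) (Fin n × Fin m) (ZMod p) :=
    Matrix.of (fun r c => if r.1 ≠ 0 ∧ c.1 = 0 ∧ c.2 = r.2 then (1 : ZMod p) else 0) with hEdef
  have hE2 : E * E = 0 := by
    ext r c
    rw [Matrix.mul_apply]
    rw [Matrix.zero_apply]
    apply Finset.sum_eq_zero
    intro k _
    by_cases h : k.1 = 0 <;> simp [hEdef, h]
  have hPQ : (1 - E) * (1 + E) = 1 := by
    rw [sub_mul, one_mul, mul_add, mul_one, hE2]
    abel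
  have hQP : (1 + E) * (1 - E) = 1 := by
    rw [add_mul, one_mul, mul_sub, mul_one, hE2]
    abel
  set M : Matrix (Fin n × Fin m) (Fin n × Fin m) (ZMod p) := (1 - E) * A * (1 + E) with hMdef
  -- entries of  A * (1 + E)  in the first block column
  have hB : ∀ r : Fin n × Fin m, ∀ b : Fin m,
      (A * (1 + E)) r ((0 : Fin n), b) = ∑ j : Fin n, A r (j, b) := by
    intro r b
    rw [Matrix.mul_apply]
    have h1 : ∀ k : Fin n × Fin m, A r k * (1 + E) k ((0 : Fin n), b)
        = (if k = ((0 : Fin n), b) then A r k else 0)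
          + (if k.1 ≠ 0 ∧ k.2 = b then A r k else 0) := by
      intro k
      rw [Matrix.add_apply, mul_add]
      congr 1
      · by_cases h : k = ((0 : Fin n), b) <;> simp [Matrix.one_apply, h]
      · simp only [hEdef, Matrix.of_apply]
        by_cases hk : k.1 = 0 <;> by_cases hd : b = k.2 <;>
          simp [hk, hd, eq_comm]
    rw [Finset.sum_congr rfl (fun k _ => h1 k), Finset.sum_add_distrib]
    rw [Finset.sum_ite_eq' Finset.univ ((0 : Fin n), b) (fun k => A r k)]
    rw [Fintype.sum_prod_type]
    have h3 : ∀ j : Fin n, (∑ d : Fin m, if (j, d).1 ≠ 0 ∧ (j, d).2 = b then A r (j, d) else 0)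
        = if j ≠ 0 then A r (j, b) else 0 := by
      intro j
      by_cases hj : j = 0
      · simp [hj]
      · simp only [hj, ne_eq, not_false_iff, true_and, if_true]
        simp [Finset.sum_ite_eq' Finset.univ b (fun d => A r (j, d)), hj]
    rw [Finset.sum_congr rfl (fun j _ => h3 j)]
    simp only [Finset.mem_univ, if_true]
    rw [← Finset.sum_filter, Finset.filter_ne' Finset.univ 0,
      Finset.add_sum_erase Finset.univ (fun j => A r (j, b)) (Finset.mem_univ 0)]
  -- multiplication by E on the left picks the (0, r.2) row
  have hEmul : ∀ (B : Matrix (Fin n × Fin m) (Fin n × Fin m) (ZMod p)) (r c : Fin n × Fin m),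
      (E * B) r c = if r.1 ≠ 0 then B ((0 : Fin n), r.2) c else 0 := by
    intro B r c
    rw [Matrix.mul_apply]
    rw [Finset.sum_eq_single ((0 : Fin n), r.2)]
    · simp [hEdef]
    · intro k _ hk
      have hcond : ¬ (r.1 ≠ 0 ∧ k.1 = 0 ∧ k.2 = r.2) := by
        intro hh
        exact hk (Prod.ext hh.2.1 hh.2.2)
      simp [hEdef, hcond]
    · intro h; exact absurd (Finset.mem_univ _) h
  have hMalt : M = A * (1 + E) - E * (A * (1 + E)) := by
    rw [hMdef, Matrix.mul_assoc, sub_mul, one_mul]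
  have key1 : ∀ r : Fin n × Fin m, r.1 ≠ 0 → ∀ b : Fin m, M r ((0:Fin n), b) = 0 := by
    intro r hr b
    rw [hMalt, Matrix.sub_apply, hEmul, if_pos hr, hB, hB]
    have h1 : (blockRowSum A r.1) r.2 b = (blockRowSum A 0) r.2 b := by rw [hS r.1]
    simp only [blockRowSum, Matrix.of_apply] at h1
    rw [sub_eq_zero]
    exact h1
  have key2 : ∀ a b : Fin m, M ((0:Fin n), a) ((0:Fin n), b) = blockRowSum A 0 a b := by
    intro a b
    rw [hMalt, Matrix.sub_apply, hEmul, if_neg (by simp), sub_zero, hB]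
    simp [blockRowSum]
  -- the difference subspace index type
  set D := {x : Fin n × Fin m // x.1 ≠ 0} with hDdef
  set N : Matrix D D (ZMod p) := Matrix.of (fun d d' => M d.1 d'.1) with hNdef
  have hz : ∀ (t : ℕ) (d : D) (b : Fin m), (M ^ t) d.1 ((0:Fin n), b) = 0 := by
    intro t
    induction t with
    | zero =>
      intro d b
      simp only [pow_zero]
      exact Matrix.one_apply_ne (fun h => d.2 (by rw [h]))
    | succ t ih =>
      intro d b
      rw [pow_succ, Matrix.mul_apply]
      apply Finset.sum_eq_zero
      intro k _
      by_cases hk : k.1 = 0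
      · have hkk : k = ((0 : Fin n), k.2) := Prod.ext hk rfl
        rw [hkk, ih d k.2, zero_mul]
      · rw [key1 k hk b, mul_zero]
  have hN : ∀ (t : ℕ) (d d' : D), (M ^ t) d.1 d'.1 = (N ^ t) d d' := by
    intro t
    induction t with
    | zero =>
      intro d d'
      simp only [pow_zero]
      by_cases h : d = d'
      · rw [h, Matrix.one_apply_eq, Matrix.one_apply_eq]
      · rw [Matrix.one_apply_ne (fun hh => h (Subtype.ext hh)), Matrix.one_apply_ne h]
    | succ t ih =>
      intro d d'
      rw [pow_succ, pow_succ, Matrix.mul_apply, Matrix.mul_apply]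
      rw [← Finset.sum_filter_add_sum_filter_not Finset.univ (fun k : Fin n × Fin m => k.1 = (0:Fin n))]
      have h0 : ∀ k ∈ Finset.univ.filter (fun k : Fin n × Fin m => k.1 = (0:Fin n)),
          (M ^ t) d.1 k * M k d'.1 = 0 := by
        intro k hk
        rw [Finset.mem_filter] at hk
        have hkk : k = ((0:Fin n), k.2) := Prod.ext hk.2 rfl
        rw [hkk, hz t d k.2, zero_mul]
      rw [Finset.sum_eq_zero h0, zero_add]
      rw [Finset.sum_subtype (p := fun k : Fin n × Fin m => k.1 ≠ (0:Fin n))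
        (Finset.univ.filter (fun k : Fin n × Fin m => ¬ k.1 = (0:Fin n)))
        (by intro x; simp) (fun k => (M ^ t) d.1 k * M k d'.1)]
      apply Finset.sum_congr rfl
      intro d'' _
      rw [ih d d'']
      rfl
  -- reindexing equivalence
  let e : (Fin m ⊕ D) ≃ (Fin n × Fin m) :=
    { toFun := Sum.elim (fun a => ((0:Fin n), a)) (fun d => d.1)
      invFun := fun x => if h : x.1 = 0 then Sum.inl x.2 else Sum.inr ⟨x, h⟩
      left_inv := by
        rintro (a | d)
        · simp
        · simp [d.2]
      right_inv := by
        intro x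
        by_cases h : x.1 = 0
        · simp only [h, dif_pos]
          exact Prod.ext h.symm rfl
        · simp [h] }
  have hcard : Fintype.card D = n * m - m := by
    have h1 : m + Fintype.card D = n * m := by
      have h2 := Fintype.card_congr e
      simpa using h2
    omega
  have hfact : A.charpoly = (blockRowSum A 0).charpoly * N.charpoly := by
    have h1 : M.charpoly = A.charpoly := charpoly_conj_aux _ _ _ hPQ
    have h2 : (M.submatrix e e).charpoly = M.charpoly := by
      have h2' := Matrix.charpoly_reindex e.symm M
      simpa [Matrix.reindex_apply] using h2'
    have h3 : M.submatrix e e =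
        Matrix.fromBlocks (blockRowSum A 0)
          (Matrix.of fun (a : Fin m) (d : D) => M ((0:Fin n), a) d.1) 0 N := by
      ext r c
      rcases r with a | d <;> rcases c with b | d'
      · exact key2 a b
      · rfl
      · exact key1 d.1 d.2 b
      · rfl
    rw [← h1, ← h2, h3, Matrix.charpoly_fromBlocks_zero₂₁]
  have hiff : (A.charpoly = X ^ (n * m - m) * (blockRowSum A 0).charpoly)
      ↔ N.charpoly = X ^ (n * m - m) := by
    rw [hfact]
    constructor
    · intro h
      have h' : (blockRowSum A 0).charpoly * N.charpoly
          = (blockRowSum A 0).charpoly * X ^ (n * m - m) := by rw [h, mul_comm]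
      exact mul_left_cancel₀ (Matrix.charpoly_monic _).ne_zero h'
    · intro h
      rw [h, mul_comm]
  rw [hiff, ← hcard, ← nilpotent_iff_charpoly_aux N]
  -- mulVec computations
  have hEv : ∀ (z : Fin n × Fin m → ZMod p) (r : Fin n × Fin m),
      (E *ᵥ z) r = if r.1 ≠ 0 then z ((0:Fin n), r.2) else 0 := by
    intro z r
    simp only [Matrix.mulVec, dotProduct]
    rw [Finset.sum_eq_single ((0 : Fin n), r.2)]
    · simp [hEdef]
    · intro k _ hk
      have hcond : ¬ (r.1 ≠ 0 ∧ k.1 = 0 ∧ k.2 = r.2) := by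
        intro hh
        exact hk (Prod.ext hh.2.1 hh.2.2)
      simp [hEdef, hcond]
    · intro h; exact absurd (Finset.mem_univ _) h
  have hA' : (1 + E) * M * (1 - E) = A := by
    rw [hMdef]
    have hassoc : (1 + E) * ((1 - E) * A * (1 + E)) * (1 - E)
        = ((1 + E) * (1 - E)) * A * ((1 + E) * (1 - E)) := by noncomm_ring
    rw [hassoc, hQP, one_mul, mul_one]
  have hAt : ∀ t : ℕ, A ^ t = (1 + E) * (M ^ t) * (1 - E) := by
    intro t
    induction t with
    | zero => simpa using hQP.symm
    | succ t ih =>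
      rw [pow_succ, ih, ← hA', pow_succ]
      have h1 : (1 + E) * M ^ t * (1 - E) * ((1 + E) * M * (1 - E))
          = (1 + E) * M ^ t * ((1 - E) * (1 + E)) * (M * (1 - E)) := by
        noncomm_ring
      rw [h1, hPQ, mul_one]
      noncomm_ring
  have hsyncv : ∀ (t : ℕ) (x : Fin n × Fin m → ZMod p) (i : Fin n) (a : Fin m),
      ((A ^ t) *ᵥ x) (i, a) = ((M ^ t) *ᵥ ((1 - E) *ᵥ x)) (i, a)
        + (if i ≠ 0 then ((M ^ t) *ᵥ ((1 - E) *ᵥ x)) ((0:Fin n), a) else 0) := by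
    intro t x i a
    rw [hAt t, ← Matrix.mulVec_mulVec, ← Matrix.mulVec_mulVec, Matrix.add_mulVec,
      Matrix.one_mulVec, Pi.add_apply, hEv]
  have hrestr : ∀ (t : ℕ) (y : Fin n × Fin m → ZMod p) (d : D),
      ((M ^ t) *ᵥ y) d.1 = ((N ^ t) *ᵥ (fun d' : D => y d'.1)) d := by
    intro t y d
    simp only [Matrix.mulVec, dotProduct]
    rw [← Finset.sum_filter_add_sum_filter_not Finset.univ
      (fun k : Fin n × Fin m => k.1 = (0:Fin n))]
    have h0 : ∀ k ∈ Finset.univ.filter (fun k : Fin n × Fin m => k.1 = (0:Fin n)),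
        (M ^ t) d.1 k * y k = 0 := by
      intro k hk
      rw [Finset.mem_filter] at hk
      have hkk : k = ((0:Fin n), k.2) := Prod.ext hk.2 rfl
      rw [hkk, hz t d k.2, zero_mul]
    rw [Finset.sum_eq_zero h0, zero_add]
    rw [Finset.sum_subtype (p := fun k : Fin n × Fin m => k.1 ≠ (0:Fin n))
      (Finset.univ.filter (fun k : Fin n × Fin m => ¬ k.1 = (0:Fin n)))
      (by intro x; simp) (fun k => (M ^ t) d.1 k * y k)]
    apply Finset.sum_congr rfl
    intro d'' _
    rw [hN t d d'']
  constructor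
  · -- synchronization implies nilpotency
    intro hsync
    choose T hT using hsync
    set g : D → ℕ := fun d' =>
      T ((1 + E) *ᵥ (fun k => if k = d'.1 then (1 : ZMod p) else 0)) with hg
    refine ⟨Finset.univ.sup g, ?_⟩
    ext d d'
    rw [Matrix.zero_apply]
    have hle : g d' ≤ Finset.univ.sup g := Finset.le_sup (Finset.mem_univ d')
    have ht := hT ((1 + E) *ᵥ (fun k => if k = d'.1 then (1 : ZMod p) else 0))
      (Finset.univ.sup g) hle d.1.1 0 d.1.2
    have hy : ((1 - E) *ᵥ ((1 + E) *ᵥ (fun k => if k = d'.1 then (1:ZMod p) else 0)))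
        = fun k => if k = d'.1 then (1:ZMod p) else 0 := by
      rw [Matrix.mulVec_mulVec, hPQ, Matrix.one_mulVec]
    rw [hsyncv, hsyncv, hy] at ht
    rw [if_pos d.2, if_neg (by simp), add_zero] at ht
    have hz0 : ((M ^ (Finset.univ.sup g)) *ᵥ (fun k => if k = d'.1 then (1:ZMod p) else 0))
        (d.1.1, d.1.2) = 0 := add_eq_right.mp ht
    have hz1 : ((M ^ (Finset.univ.sup g)) *ᵥ (fun k => if k = d'.1 then (1:ZMod p) else 0))
        d.1 = 0 := hz0
    rw [hrestr _ _ d] at hz1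
    have hsingle : (fun d'' : D => if d''.1 = d'.1 then (1:ZMod p) else 0)
        = (fun d'' : D => if d'' = d' then (1:ZMod p) else 0) := by
      funext d''
      by_cases h : d'' = d'
      · rw [if_pos h, if_pos (by rw [h])]
      · rw [if_neg h, if_neg (fun hh => h (Subtype.ext hh))]
    rw [hsingle] at hz1
    have hextr : ((N ^ (Finset.univ.sup g)) *ᵥ
        (fun d'' : D => if d'' = d' then (1:ZMod p) else 0)) d
        = (N ^ (Finset.univ.sup g)) d d' := by
      simp only [Matrix.mulVec, dotProduct]
      rw [Finset.sum_eq_single d']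
      · simp
      · intro b _ hb
        rw [if_neg hb, mul_zero]
      · intro h; exact absurd (Finset.mem_univ _) h
    rw [hextr] at hz1
    exact hz1
  · -- nilpotency implies synchronization
    rintro ⟨K, hK⟩
    intro x
    refine ⟨K, ?_⟩
    intro t ht i j a
    have hNt : N ^ t = 0 := by
      have h1 : N ^ t = N ^ K * N ^ (t - K) := by
        rw [← pow_add]
        congr 1
        omega
      rw [h1, hK, zero_mul]
    have hzero : ∀ (i : Fin n), i ≠ 0 → ∀ a : Fin m,
        ((M ^ t) *ᵥ ((1 - E) *ᵥ x)) (i, a) = 0 := by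
      intro i hi a
      have h2 := hrestr t ((1 - E) *ᵥ x) ⟨(i,a), hi⟩
      rw [h2, hNt]
      simp [Matrix.zero_mulVec]
    have h0a : ∀ k : Fin n, ((A ^ t) *ᵥ x) (k, a)
        = ((M ^ t) *ᵥ ((1 - E) *ᵥ x)) ((0:Fin n), a) := by
      intro k
      rw [hsyncv t x k a]
      by_cases hk : k = 0
      · rw [if_neg (by simp [hk]), add_zero, hk]
      · rw [if_pos hk, hzero k hk a, zero_add]
    rw [h0a i, h0a j]
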